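/- For ω ∈ (0, π) and c > 1/2, let E_{ω,c} = {n ∈ ℕ, n ≥ 1 : sin(ω) · sin(nω) ≥ c}. Then a real number ω ∈ (0, π) satisfies 'there exists c > 1/2 such that E_{ω,c} has positive lower density' if and only if ω ∈ (π/6, 5π/6). -/

import Mathlib

open Real

set_option maxHeartbeats 1000000

/-- The lower (asymptotic) density of a set `A` of positive integers:
`liminf_{n → ∞} |A ∩ {1, …, n}| / n`. -/
noncomputable def lowerDensity (A : Set ℕ) : ℝ :=
  Filter.liminf (fun n : ℕ => ((A ∩ Set.Icc 1 n).ncard : ℝ) / n) Filter.atTop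

/-- `E_{ω,c}`: the set of positive integers `n` such that `sin ω · sin (nω) ≥ c`. -/
def Eset (ω c : ℝ) : Set ℕ := {n : ℕ | 1 ≤ n ∧ c ≤ Real.sin ω * Real.sin (n * ω)}

open Filter

lemma density_pos_of_f (E : Set ℕ) (C : ℕ) (hC : 1 ≤ C) (f : ℕ → ℕ)
    (hmono : StrictMono f) (h1 : ∀ j, 1 ≤ f j) (hE : ∀ j, f j ∈ E)
    (hgrow : ∀ j, f j ≤ C * (j + 1)) : 0 < lowerDensity E := by
  have hCpos : (0:ℝ) < C := by exact_mod_cast hC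
  have key : ∀ N : ℕ, 2 * C ≤ N → (1 : ℝ) / (2 * C) ≤ ((E ∩ Set.Icc 1 N).ncard : ℝ) / N := by
    intro N hN
    have hNpos : 0 < N := by omega
    set M := N / C with hM
    have hMpos : 1 ≤ M := by
      rw [hM]; exact Nat.one_le_div_iff (by omega) |>.2 (by omega)
    have hsub : ((Finset.range M).image f : Set ℕ) ⊆ E ∩ Set.Icc 1 N := by
      intro x hx
      simp only [Finset.coe_image, Set.mem_image, Finset.mem_coe, Finset.mem_range] at hx
      obtain ⟨j, hj, rfl⟩ := hx
      refine ⟨hE j, h1 j, ?_⟩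
      calc f j ≤ C * (j + 1) := hgrow j
        _ ≤ C * M := by exact Nat.mul_le_mul_left _ (by omega)
        _ ≤ N := by rw [hM, mul_comm]; exact Nat.div_mul_le_self N C
    have hfin : (E ∩ Set.Icc 1 N).Finite := (Set.finite_Icc 1 N).subset Set.inter_subset_right
    have hcard : M ≤ (E ∩ Set.Icc 1 N).ncard := by
      have := Set.ncard_le_ncard hsub hfin
      rwa [Set.ncard_coe_finset, Finset.card_image_of_injective _ hmono.injective,
        Finset.card_range] at this
    have hreal2 : (N : ℝ) ≤ C * (M + 1) := by
      have h2 : N < C * (M + 1) := by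
        rw [hM]; exact Nat.lt_mul_div_succ N (by omega)
      exact_mod_cast h2.le
    have hNR : (0:ℝ) < N := by exact_mod_cast hNpos
    have hcardR : (M : ℝ) ≤ ((E ∩ Set.Icc 1 N).ncard : ℝ) := by exact_mod_cast hcard
    have hNC : (2 * C : ℝ) ≤ N := by exact_mod_cast hN
    have hMR : (1:ℝ) ≤ M := by exact_mod_cast hMpos
    rw [div_le_div_iff₀ (by positivity) hNR]
    nlinarith
  have hbdd : IsBoundedUnder (· ≤ ·) atTop (fun N : ℕ => ((E ∩ Set.Icc 1 N).ncard : ℝ) / N) := by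
    refine ⟨1, eventually_map.2 ?_⟩
    filter_upwards [eventually_ge_atTop 1] with N hN
    have hfin : (E ∩ Set.Icc 1 N).Finite := (Set.finite_Icc 1 N).subset Set.inter_subset_right
    have h1' : (E ∩ Set.Icc 1 N).ncard ≤ N := by
      have := Set.ncard_le_ncard (Set.inter_subset_right (s := E)) (Set.finite_Icc 1 N)
      simpa [Nat.card_coe_set_eq] using this.trans_eq (by
        rw [Set.ncard_eq_toFinset_card']; simp)
    have : ((E ∩ Set.Icc 1 N).ncard : ℝ) ≤ N := by exact_mod_cast h1'
    have hNR : (0:ℝ) < N := by exact_mod_cast hN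
    rw [div_le_one hNR]; exact this
  have hev : ∀ᶠ N in atTop, (1 : ℝ) / (2 * C) ≤ ((E ∩ Set.Icc 1 N).ncard : ℝ) / N := by
    filter_upwards [eventually_ge_atTop (2 * C)] with N hN using key N hN
  have := le_liminf_of_le hbdd.isCoboundedUnder_ge hev
  refine lt_of_lt_of_le ?_ this
  positivity

lemma half_lt_sin {ω : ℝ} (h : ω ∈ Set.Ioo (π/6) (5*π/6)) : 1/2 < Real.sin ω := by
  obtain ⟨h1, h2⟩ := h
  rcases le_or_gt ω (π/2) with hle | hlt
  · have := Real.strictMonoOn_sin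
      (Set.mem_Icc.2 ⟨by linarith [pi_pos], by linarith [pi_pos]⟩)
      (Set.mem_Icc.2 ⟨by linarith [pi_pos], hle⟩) h1
    rwa [Real.sin_pi_div_six] at this
  · have hω' : π - ω ∈ Set.Ioo (π/6) (π/2) := ⟨by linarith, by linarith⟩
    have := Real.strictMonoOn_sin
      (Set.mem_Icc.2 ⟨by linarith [pi_pos], by linarith [pi_pos]⟩)
      (Set.mem_Icc.2 ⟨by linarith [pi_pos], hω'.2.le⟩) hω'.1
    rwa [Real.sin_pi_div_six, Real.sin_pi_sub] at this

lemma sin_le_half_of_out {ω : ℝ} (h : ω ∈ Set.Ioo 0 π) (h2 : ω ≤ π/6 ∨ 5*π/6 ≤ ω) :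
    Real.sin ω ≤ 1/2 := by
  rcases h2 with hle | hge
  · have := Real.strictMonoOn_sin.monotoneOn (a := ω) (b := π/6)
      ⟨by linarith [pi_pos, h.1], by linarith [pi_pos]⟩
      ⟨by linarith [pi_pos], by linarith [pi_pos]⟩ hle
    rwa [Real.sin_pi_div_six] at this
  · have := Real.strictMonoOn_sin.monotoneOn (a := π - ω) (b := π/6)
      ⟨by linarith [pi_pos, h.2], by linarith [pi_pos, h.2]⟩
      ⟨by linarith [pi_pos], by linarith [pi_pos]⟩ (by linarith)
    rwa [Real.sin_pi_div_six, Real.sin_pi_sub] at this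

lemma chord_sin {ω : ℝ} (h : ω ∈ Set.Icc (π/6) (5*π/6)) :
    1/2 + (3/(2*π)) * min (ω - π/6) (5*π/6 - ω) ≤ Real.sin ω := by
  obtain ⟨h1, h2⟩ := h
  have hπ := pi_pos
  have hcc := strictConcaveOn_sin_Icc.concaveOn
  rcases le_or_gt ω (π/2) with hle | hlt
  · have hmin : min (ω - π/6) (5*π/6 - ω) ≤ ω - π/6 := min_le_left _ _
    have key : 1/2 + (3/(2*π)) * (ω - π/6) ≤ Real.sin ω := by
      set b : ℝ := (ω - π/6) * (3/π) with hb
      set a : ℝ := 1 - b with ha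
      have hb0 : 0 ≤ b := by
        have h0 : (0:ℝ) ≤ ω - π/6 := by linarith
        rw [hb]; positivity
      have hb1 : b ≤ 1 := by
        rw [hb]
        calc (ω - π/6) * (3/π) ≤ (π/3) * (3/π) :=
              mul_le_mul_of_nonneg_right (by linarith) (by positivity)
          _ = 1 := by field_simp
      have hab : a + b = 1 := by ring
      have := hcc.2 (x := π/6) (y := π/2)
        ⟨by linarith, by linarith⟩ ⟨by linarith, by linarith⟩ (by linarith : (0:ℝ) ≤ a) hb0 hab
      rw [smul_eq_mul, smul_eq_mul, smul_eq_mul, smul_eq_mul, Real.sin_pi_div_six,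
        Real.sin_pi_div_two] at this
      have hx : a * (π/6) + b * (π/2) = ω := by
        rw [ha, hb]; field_simp; ring
      rw [hx] at this
      calc 1/2 + (3/(2*π)) * (ω - π/6) = a * (1/2) + b * 1 := by
            rw [ha, hb]; field_simp; ring
        _ ≤ Real.sin ω := this
    have hk : (0:ℝ) ≤ 3/(2*π) := by positivity
    nlinarith [mul_le_mul_of_nonneg_left hmin hk]
  · have hmin : min (ω - π/6) (5*π/6 - ω) ≤ 5*π/6 - ω := min_le_right _ _
    have key : 1/2 + (3/(2*π)) * (5*π/6 - ω) ≤ Real.sin ω := by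
      set b : ℝ := (5*π/6 - ω) * (3/π) with hb
      set a : ℝ := 1 - b with ha
      have hb0 : 0 ≤ b := by
        have : (0:ℝ) ≤ 5*π/6 - ω := by linarith
        positivity
      have hb1 : b ≤ 1 := by
        rw [hb]
        calc (5*π/6 - ω) * (3/π) ≤ (π/3) * (3/π) :=
              mul_le_mul_of_nonneg_right (by linarith) (by positivity)
          _ = 1 := by field_simp
      have hab : a + b = 1 := by ring
      have := hcc.2 (x := 5*π/6) (y := π/2)
        ⟨by linarith, by linarith⟩ ⟨by linarith, by linarith⟩ (by linarith : (0:ℝ) ≤ a) hb0 hab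
      rw [smul_eq_mul, smul_eq_mul, smul_eq_mul, smul_eq_mul, Real.sin_pi_div_two] at this
      have hs56 : Real.sin (5*π/6) = 1/2 := by
        rw [show (5*π/6 : ℝ) = π - π/6 by ring, Real.sin_pi_sub, Real.sin_pi_div_six]
      rw [hs56] at this
      have hx : a * (5*π/6) + b * (π/2) = ω := by
        rw [ha, hb]; field_simp; ring
      rw [hx] at this
      calc 1/2 + (3/(2*π)) * (5*π/6 - ω) = a * (1/2) + b * 1 := by
            rw [ha, hb]; field_simp; ring
        _ ≤ Real.sin ω := this
    have hk : (0:ℝ) ≤ 3/(2*π) := by positivity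
    nlinarith [mul_le_mul_of_nonneg_left hmin hk]

lemma crossing (δ z : ℝ) (hδ0 : 0 < δ) (hδ1 : δ ≤ 1) (hz : 0 ≤ z) :
    ∃ g : ℕ → ℕ, StrictMono g ∧ (∀ i, 1 ≤ g i) ∧
      (∀ i, z + 2*π*i < (g i : ℝ) * δ ∧ (g i : ℝ) * δ ≤ z + 2*π*i + δ) ∧
      (∀ i, (g i : ℝ) ≤ ((z + 2*π)/δ + 1) * (i+1)) := by
  have hπ := pi_pos
  set g : ℕ → ℕ := fun i => ⌊(z + 2*π*i)/δ⌋₊ + 1 with hg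
  have hx0 : ∀ i : ℕ, (0:ℝ) ≤ (z + 2*π*i)/δ := fun i => by positivity
  have hval : ∀ i : ℕ, z + 2*π*i < (g i : ℝ) * δ ∧ (g i : ℝ) * δ ≤ z + 2*π*i + δ := by
    intro i
    have h1 : ((⌊(z + 2*π*i)/δ⌋₊ : ℝ)) ≤ (z + 2*π*i)/δ := Nat.floor_le (hx0 i)
    have h2 : (z + 2*π*i)/δ < (⌊(z + 2*π*i)/δ⌋₊ : ℝ) + 1 := Nat.lt_floor_add_one _
    have hxδ : (z + 2*π*i)/δ * δ = z + 2*π*i := div_mul_cancel₀ _ hδ0.ne'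
    have hgi : (g i : ℝ) = (⌊(z + 2*π*i)/δ⌋₊ : ℝ) + 1 := by simp [hg]
    constructor
    · rw [hgi]; nlinarith [mul_lt_mul_of_pos_right h2 hδ0]
    · rw [hgi]; nlinarith [mul_le_mul_of_nonneg_right h1 hδ0.le]
  have hmono : StrictMono g := by
    apply strictMono_nat_of_lt_succ
    intro i
    have h1 := (hval i).2
    have h2 := (hval (i+1)).1
    have hlt : (g i : ℝ) * δ < (g (i+1) : ℝ) * δ := by
      push_cast at h1 h2 ⊢
      nlinarith [pi_gt_three]
    have := lt_of_mul_lt_mul_right hlt hδ0.le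
    exact_mod_cast this
  refine ⟨g, hmono, fun i => by simp [hg], hval, ?_⟩
  intro i
  have h1 : ((⌊(z + 2*π*i)/δ⌋₊ : ℝ)) ≤ (z + 2*π*i)/δ := Nat.floor_le (hx0 i)
  have hiR : (0:ℝ) ≤ (i:ℝ) := Nat.cast_nonneg i
  have hstep : (z + 2*π*i)/δ ≤ (z + 2*π)/δ * (i+1) := by
    rw [div_mul_eq_mul_div]
    rw [div_le_div_iff_of_pos_right hδ0]
    nlinarith
  have hgi : (g i : ℝ) = (⌊(z + 2*π*i)/δ⌋₊ : ℝ) + 1 := by simp [hg]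
  rw [hgi]
  nlinarith [hx0 i]

lemma cos_theta_bound {θ ε : ℝ} (h0 : 0 ≤ θ) (hθ : θ ≤ ε) : 1 - ε^2/2 ≤ Real.cos θ := by
  have := Real.one_sub_sq_div_two_le_cos (x := θ)
  nlinarith

lemma irrational_case {ω : ℝ} (hω : ω ∈ Set.Ioo 0 π)
    (hirr : ∀ q : ℕ, 1 ≤ q → ∀ m : ℤ, (q:ℝ) * ω ≠ 2*π*m) {ε : ℝ} (hε0 : 0 < ε) (hε1 : ε ≤ 1) :
    ∃ C : ℕ, 1 ≤ C ∧ ∃ f : ℕ → ℕ, StrictMono f ∧ (∀ i, 1 ≤ f i) ∧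
      (∀ i, f i ≤ C * (i+1)) ∧ ∀ i, 1 - ε^2/2 ≤ Real.sin ((f i : ℝ) * ω) := by
  have hπ := pi_pos
  set N : ℕ := ⌈2*π/ε⌉₊ with hN
  have hN1 : 1 ≤ N := by
    rw [hN, Nat.one_le_ceil_iff]; positivity
  obtain ⟨a, k, hk0, hkN, habs⟩ := Real.exists_int_int_abs_mul_sub_le (ω/(2*π)) (n := N) hN1
  set q : ℕ := k.toNat with hq
  have hq1 : 1 ≤ q := by omega
  have hqk : (q : ℝ) = (k : ℝ) := by
    rw [hq]
    have := Int.toNat_of_nonneg hk0.le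
    exact_mod_cast congrArg (fun z : ℤ => (z : ℝ)) this
  set δ₀ : ℝ := q * ω - 2*π*a with hδ₀
  have hδ₀eq : δ₀ = 2*π * ((k:ℝ) * (ω/(2*π)) - a) := by
    rw [hδ₀, hqk]; field_simp
  have habs2 : |δ₀| ≤ ε := by
    rw [hδ₀eq, abs_mul, abs_of_pos (by positivity : (0:ℝ) < 2*π)]
    have h1 : (2*π/ε : ℝ) ≤ (N:ℝ) + 1 := (Nat.le_ceil _).trans (by rw [← hN]; linarith)
    calc 2*π * |(k:ℝ) * (ω/(2*π)) - a| ≤ 2*π * (1/((N:ℝ)+1)) := by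
          apply mul_le_mul_of_nonneg_left ?_ (by positivity)
          exact_mod_cast habs
      _ ≤ ε := by
          rw [mul_one_div, div_le_iff₀ (by positivity)]
          rw [div_le_iff₀ hε0] at h1
          linarith
  have hδ₀ne : δ₀ ≠ 0 := by
    intro h
    exact hirr q hq1 a (by rw [hδ₀] at h; linarith)
  rcases hδ₀ne.lt_or_gt with hneg | hpos
  · -- δ₀ < 0 : q ω = 2π a - δ with δ = -δ₀
    set δ : ℝ := -δ₀ with hδdef
    have hδ0 : 0 < δ := by rw [hδdef]; linarith
    have hδε : δ ≤ ε := by rw [hδdef]; rw [abs_of_neg hneg] at habs2; linarith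
    obtain ⟨g, hgmono, hg1, hgval, hggrow⟩ := crossing δ (3*π/2) hδ0 (hδε.trans hε1) (by positivity)
    set C : ℕ := ⌈((3*π/2 + 2*π)/δ + 1) * q⌉₊ with hC
    refine ⟨C, ?_, fun i => g i * q, ?_, ?_, ?_, ?_⟩
    · rw [hC, Nat.one_le_ceil_iff]; positivity
    · intro i j hij
      exact Nat.mul_lt_mul_of_lt_of_le (hgmono hij) le_rfl hq1
    · intro i; exact Nat.mul_pos (hg1 i) hq1
    · intro i
      have h1 := hggrow i
      have : ((g i * q : ℕ) : ℝ) ≤ (((3*π/2 + 2*π)/δ + 1) * q) * (i+1) := by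
        push_cast
        nlinarith [Nat.cast_nonneg (α := ℝ) q, Nat.cast_nonneg (α := ℝ) i]
      have h2 : (((3*π/2 + 2*π)/δ + 1) * q) * ((i:ℝ)+1) ≤ (C:ℝ) * (i+1) := by
        apply mul_le_mul_of_nonneg_right (Nat.le_ceil _) (by positivity)
      have := this.trans h2
      exact_mod_cast this
    · intro i
      obtain ⟨hlo, hhi⟩ := hgval i
      set θ : ℝ := (g i : ℝ) * δ - (3*π/2 + 2*π*i) with hθdef
      have hθ0 : 0 ≤ θ := by rw [hθdef]; linarith
      have hθε : θ ≤ ε := by rw [hθdef]; linarith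
      have hqωeq : (q:ℝ) * ω = 2*π*a - δ := by rw [hδdef, hδ₀]; ring
      have heval : ((g i * q : ℕ) : ℝ) * ω = -(θ + π/2) + π + (g i * a - (i+1) : ℤ) * (2*π) := by
        push_cast
        rw [mul_assoc, hqωeq]
        rw [hθdef]
        ring
      rw [heval, Real.sin_add_int_mul_two_pi, ← Real.sin_pi_sub]
      have : π - (-(θ + π/2) + π) = θ + π/2 := by ring
      rw [this, Real.sin_add_pi_div_two]
      exact cos_theta_bound hθ0 hθε
  · -- δ₀ > 0
    have hδ0 : 0 < δ₀ := hpos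
    have hδε : δ₀ ≤ ε := by rw [abs_of_pos hpos] at habs2; exact habs2
    obtain ⟨g, hgmono, hg1, hgval, hggrow⟩ := crossing δ₀ (π/2) hδ0 (hδε.trans hε1) (by positivity)
    set C : ℕ := ⌈((π/2 + 2*π)/δ₀ + 1) * q⌉₊ with hC
    refine ⟨C, ?_, fun i => g i * q, ?_, ?_, ?_, ?_⟩
    · rw [hC, Nat.one_le_ceil_iff]; positivity
    · intro i j hij
      exact Nat.mul_lt_mul_of_lt_of_le (hgmono hij) le_rfl hq1
    · intro i; exact Nat.mul_pos (hg1 i) hq1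
    · intro i
      have h1 := hggrow i
      have : ((g i * q : ℕ) : ℝ) ≤ (((π/2 + 2*π)/δ₀ + 1) * q) * (i+1) := by
        push_cast
        nlinarith [Nat.cast_nonneg (α := ℝ) q, Nat.cast_nonneg (α := ℝ) i]
      have h2 : (((π/2 + 2*π)/δ₀ + 1) * q) * ((i:ℝ)+1) ≤ (C:ℝ) * (i+1) := by
        apply mul_le_mul_of_nonneg_right (Nat.le_ceil _) (by positivity)
      have := this.trans h2
      exact_mod_cast this
    · intro i
      obtain ⟨hlo, hhi⟩ := hgval i
      set θ : ℝ := (g i : ℝ) * δ₀ - (π/2 + 2*π*i) with hθdef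
      have hθ0 : 0 ≤ θ := by rw [hθdef]; linarith
      have hθε : θ ≤ ε := by rw [hθdef]; linarith
      have hqωeq : (q:ℝ) * ω = 2*π*a + δ₀ := by rw [hδ₀]; ring
      have heval : ((g i * q : ℕ) : ℝ) * ω = (θ + π/2) + (g i * a + i : ℤ) * (2*π) := by
        push_cast
        rw [mul_assoc, hqωeq]
        rw [hθdef]
        ring
      rw [heval, Real.sin_add_int_mul_two_pi, Real.sin_add_pi_div_two]
      exact cos_theta_bound hθ0 hθε

lemma residue_solve {q : ℕ} (hq : 1 ≤ q) {m : ℕ} (hcop : Nat.Coprime m q) (j : ℕ) :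
    ∃ n : ℕ, 1 ≤ n ∧ ∃ L : ℤ, (n : ℤ) * m = j + q * L := by
  haveI : NeZero q := ⟨by omega⟩
  have hu : IsUnit (m : ZMod q) := (ZMod.isUnit_iff_coprime m q).2 hcop
  set n₁ : ℕ := ((j : ZMod q) * (↑m)⁻¹).val with hn₁
  refine ⟨n₁ + q, by omega, ?_⟩
  have h1 : (((n₁ + q) * m : ℕ) : ZMod q) = (j : ZMod q) := by
    push_cast
    rw [ZMod.natCast_self, add_zero, hn₁, ZMod.natCast_val, ZMod.cast_id, mul_assoc,
      ZMod.inv_mul_of_unit _ hu, mul_one]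
  have h2 : ((n₁ + q) * m : ℕ) ≡ j [MOD q] := (ZMod.natCast_eq_natCast_iff _ _ _).1 h1
  obtain ⟨L, hL⟩ := h2.dvd
  refine ⟨-L, ?_⟩
  push_cast at hL ⊢
  linarith

lemma orbit_sin {ω : ℝ} {q : ℕ} {m : ℕ} (hq : 1 ≤ q) (hcop : Nat.Coprime m q)
    (hωval : ω = 2*π*m/q) (j : ℕ) :
    ∃ n : ℕ, 1 ≤ n ∧ Real.sin ((n:ℝ) * ω) = Real.sin (2*π*j/q) := by
  obtain ⟨n, hn1, L, hL⟩ := residue_solve hq hcop j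
  refine ⟨n, hn1, ?_⟩
  have hqR : (0:ℝ) < q := by exact_mod_cast hq
  have : (n:ℝ) * ω = 2*π*j/q + L * (2*π) := by
    rw [hωval]
    have hLR : (n:ℝ) * m = j + q * L := by exact_mod_cast hL
    field_simp
    linear_combination hLR
  rw [this, Real.sin_add_int_mul_two_pi]

lemma sin_orbit_near {q : ℕ} (hq : 1 ≤ q) (j : ℕ) (e : ℝ) (he : ((q:ℝ) - 4*j)^2 = e^2) :
    1 - (π*e)^2/(8*(q:ℝ)^2) ≤ Real.sin (2*π*j/q) := by
  have hqR : (0:ℝ) < q := by exact_mod_cast hq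
  have h1 : Real.sin (2*π*j/q) = Real.cos (π/2 - 2*π*j/q) := (Real.cos_pi_div_two_sub _).symm
  rw [h1]
  have h2 := Real.one_sub_sq_div_two_le_cos (x := π/2 - 2*π*j/q)
  have heq : (π/2 - 2*π*j/q) * (2*q) = π*((q:ℝ) - 4*j) := by field_simp; ring
  have hsq := congrArg (fun x : ℝ => x^2) heq
  have h3 : (π/2 - 2*π*j/q)^2 = (π*e)^2/(4*(q:ℝ)^2) := by
    rw [eq_div_iff (by positivity : (4*(q:ℝ)^2) ≠ 0)]
    calc (π/2 - 2*π*j/q)^2 * (4*(q:ℝ)^2) = ((π/2 - 2*π*j/q)*(2*q))^2 := by ring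
      _ = (π*((q:ℝ) - 4*j))^2 := hsq
      _ = π^2 * ((q:ℝ) - 4*j)^2 := by ring
      _ = π^2 * e^2 := by rw [he]
      _ = (π*e)^2 := by ring
  rw [h3] at h2
  refine le_trans (le_of_eq ?_) h2
  ring

lemma rational_case {ω : ℝ} (hω : ω ∈ Set.Ioo 0 π) (hmem : ω ∈ Set.Ioo (π/6) (5*π/6))
    {q : ℕ} {m : ℤ} (hq1 : 1 ≤ q) (hqω : (q:ℝ) * ω = 2*π*m)
    (hmin : ∀ q' : ℕ, 1 ≤ q' → q' < q → ∀ m' : ℤ, (q':ℝ) * ω ≠ 2*π*m') :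
    ∃ n₀ : ℕ, 1 ≤ n₀ ∧ 1/2 < Real.sin ω * Real.sin ((n₀:ℝ) * ω) := by
  have hπ := pi_pos
  have hqR : (0:ℝ) < q := by exact_mod_cast hq1
  have hm1 : 1 ≤ m := by
    by_contra h
    push_neg at h
    have hm0 : (m:ℝ) ≤ 0 := by exact_mod_cast (by omega : m ≤ 0)
    nlinarith [mul_pos hqR hω.1, mul_nonpos_of_nonneg_of_nonpos (by positivity : (0:ℝ) ≤ 2*π) hm0]
  have hmR : (1:ℝ) ≤ m := by exact_mod_cast hm1
  have hωval : ω = 2*π*m/q := by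
    rw [eq_div_iff hqR.ne']; linarith [hqω]
  set mn : ℕ := m.toNat with hmn
  have hmnR : (mn:ℝ) = (m:ℝ) := by
    have : (mn : ℤ) = m := Int.toNat_of_nonneg (by omega)
    exact_mod_cast congrArg (fun z : ℤ => (z:ℝ)) this
  have hωval' : ω = 2*π*mn/q := by rw [hωval, hmnR]
  have hcop : Nat.Coprime mn q := by
    by_contra hd
    set d : ℕ := Nat.gcd mn q with hdd
    have hd1 : d ≠ 1 := hd
    have hdq : d ∣ q := Nat.gcd_dvd_right _ _
    have hdm : d ∣ mn := Nat.gcd_dvd_left _ _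
    have hdpos : 0 < d := Nat.gcd_pos_of_pos_right _ (by omega)
    have hd2 : 2 ≤ d := by omega
    obtain ⟨q', hq'⟩ := hdq
    obtain ⟨mn', hmn'⟩ := hdm
    have hq'1 : 1 ≤ q' := by
      rcases Nat.eq_zero_or_pos q' with h | h
      · subst h; simp at hq'; omega
      · exact h
    have h2q : 2*q' ≤ q := by
      calc 2*q' ≤ d*q' := Nat.mul_le_mul_right q' hd2
        _ = q := hq'.symm
    have hq'lt : q' < q := by omega
    refine hmin q' hq'1 hq'lt mn' ?_
    have hdR : (0:ℝ) < d := by exact_mod_cast hdpos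
    have hqeq : (q:ℝ) = d * q' := by exact_mod_cast congrArg (fun z : ℕ => (z:ℝ)) hq'
    have hmeq : (mn:ℝ) = d * mn' := by exact_mod_cast congrArg (fun z : ℕ => (z:ℝ)) hmn'
    have h2 : ((q':ℝ) * ω) * d = (2*π*mn') * d := by
      have h3 : (d:ℝ) * q' * ω = 2*π*(d * mn') := by
        rw [← hqeq, ← hmeq, hqω, hmnR]
      linear_combination h3
    exact mul_right_cancel₀ hdR.ne' h2
  have hq3 : 3 ≤ q := by
    by_contra h
    push_neg at h
    interval_cases q
    · have h1 : ω = 2*π*m := by rw [hωval]; norm_num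
      nlinarith [hω.2]
    · have h1 : ω = π*m := by
        have h2 := hqω
        push_cast at h2
        linarith
      nlinarith [hω.2]
  have hq3R : (3:ℝ) ≤ q := by exact_mod_cast hq3
  -- chord lower bound
  have h12 : (1:ℝ) ≤ 12*(m:ℝ) - q := by
    have hlt : π/6 < ω := hmem.1
    rw [hωval, lt_div_iff₀ hqR] at hlt
    have hr : (q:ℝ) < 12*m := by nlinarith
    have hz : (q:ℤ) < 12*m := by exact_mod_cast hr
    have : (1:ℤ) ≤ 12*m - q := by omega
    exact_mod_cast this
  have h5 : (1:ℝ) ≤ 5*(q:ℝ) - 12*m := by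
    have hlt : ω < 5*π/6 := hmem.2
    rw [hωval, div_lt_iff₀ hqR] at hlt
    have hr : 12*(m:ℝ) < 5*q := by nlinarith
    have hz : 12*m < 5*(q:ℤ) := by exact_mod_cast hr
    have : (1:ℤ) ≤ 5*q - 12*m := by omega
    exact_mod_cast this
  have hs : 1/2 + 1/(4*(q:ℝ)) ≤ Real.sin ω := by
    have hmin1 : π/(6*q) ≤ ω - π/6 := by
      have heq : ω - π/6 = π*(12*(m:ℝ) - q)/(6*q) := by rw [hωval]; field_simp; ring
      rw [heq, div_le_div_iff_of_pos_right (by positivity)]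
      nlinarith
    have hmin2 : π/(6*q) ≤ 5*π/6 - ω := by
      have heq : 5*π/6 - ω = π*(5*(q:ℝ) - 12*m)/(6*q) := by rw [hωval]; field_simp; ring
      rw [heq, div_le_div_iff_of_pos_right (by positivity)]
      nlinarith
    have hchord := chord_sin ⟨hmem.1.le, hmem.2.le⟩
    have hminb : π/(6*q) ≤ min (ω - π/6) (5*π/6 - ω) := le_min hmin1 hmin2
    have h30 : (0:ℝ) ≤ 3/(2*π) := by positivity
    have hmul := mul_le_mul_of_nonneg_left hminb h30
    have heq2 : (3/(2*π)) * (π/(6*(q:ℝ))) = 1/(4*(q:ℝ)) := by field_simp; ring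
    rw [heq2] at hmul
    linarith
  have hsin_pos : 0 ≤ Real.sin ω := by
    have : (0:ℝ) < 1/(4*(q:ℝ)) := by positivity
    linarith
  have hπ2 : π^2 < 9.9225 := by nlinarith [pi_lt_d2, pi_gt_three]
  have hq4 : q % 4 = 0 ∨ q % 4 = 1 ∨ q % 4 = 2 ∨ q % 4 = 3 := by omega
  -- helper for the odd cases
  have odd_case : ∀ j : ℕ, ((q:ℝ) - 4*(j:ℝ))^2 = 1^2 →
      ∃ n₀ : ℕ, 1 ≤ n₀ ∧ 1/2 < Real.sin ω * Real.sin ((n₀:ℝ) * ω) := by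
    intro j hqt
    obtain ⟨n, hn1, hsn⟩ := orbit_sin hq1 hcop hωval' j
    refine ⟨n, hn1, ?_⟩
    have hv := sin_orbit_near hq1 j 1 hqt
    rw [hsn]
    have hc0 : (0:ℝ) ≤ 1 - (π*1)^2/(8*(q:ℝ)^2) := by
      rw [sub_nonneg, div_le_one (by positivity)]
      nlinarith
    have hkey : (1:ℝ)/2 < (1/2 + 1/(4*(q:ℝ))) * (1 - (π*1)^2/(8*(q:ℝ)^2)) := by
      have hdiff : (1/2 + 1/(4*(q:ℝ))) * (1 - (π*1)^2/(8*(q:ℝ)^2)) - 1/2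
          = (8*(q:ℝ)^2 - 2*π^2*(q:ℝ) - π^2) / (32*(q:ℝ)^3) := by
        field_simp
        ring
      have hnum : (0:ℝ) < 8*(q:ℝ)^2 - 2*π^2*(q:ℝ) - π^2 := by
        nlinarith [mul_nonneg (sub_nonneg.2 hq3R) hqR.le]
      have hpos : (0:ℝ) < (8*(q:ℝ)^2 - 2*π^2*(q:ℝ) - π^2) / (32*(q:ℝ)^3) := by positivity
      linarith
    calc (1:ℝ)/2 < (1/2 + 1/(4*(q:ℝ))) * (1 - (π*1)^2/(8*(q:ℝ)^2)) := hkey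
      _ ≤ Real.sin ω * Real.sin (2*π*(j:ℝ)/q) := mul_le_mul hs hv hc0 hsin_pos
  rcases hq4 with h4 | h4 | h4 | h4
  · -- q ≡ 0 mod 4 : hit π/2 exactly
    obtain ⟨n, hn1, hsn⟩ := orbit_sin hq1 hcop hωval' (q / 4)
    refine ⟨n, hn1, ?_⟩
    have hqt : ((q/4 : ℕ) : ℝ) * 4 = (q:ℝ) := by
      have : (q/4) * 4 = q := by omega
      exact_mod_cast congrArg (fun z : ℕ => (z:ℝ)) this
    have hhalf : (2*π*((q/4 : ℕ):ℝ)/q) = π/2 := by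
      rw [div_eq_div_iff hqR.ne' (by norm_num : (2:ℝ) ≠ 0)]
      linear_combination π * hqt
    rw [hsn, hhalf, Real.sin_pi_div_two, mul_one]
    exact half_lt_sin hmem
  · -- q ≡ 1 mod 4
    apply odd_case (q/4)
    have ht : q = 4*(q/4) + 1 := by omega
    have htR : (q:ℝ) = 4*((q/4 : ℕ):ℝ) + 1 := by exact_mod_cast congrArg (fun z : ℕ => (z:ℝ)) ht
    rw [htR]; ring
  · -- q ≡ 2 mod 4
    rcases lt_or_ge q 14 with hqlt | hqge
    · -- q = 6 or q = 10
      have hq610 : q = 6 ∨ q = 10 := by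
        have : q ≠ 2 := by omega
        interval_cases q <;> omega
      rcases hq610 with rfl | rfl
      · -- q = 6
        have hmlt : m < 3 := by
          have hlt := hω.2
          rw [hωval] at hlt
          have hr : (m:ℝ) < 3 := by
            push_cast at hlt
            nlinarith
          exact_mod_cast hr
        interval_cases m
        · -- m = 1 : ω = π/3
          refine ⟨1, le_rfl, ?_⟩
          have hωeq : ω = π/3 := by rw [hωval]; push_cast; ring
          rw [hωeq]
          push_cast
          rw [one_mul, Real.sin_pi_div_three]
          nlinarith [Real.sq_sqrt (by norm_num : (0:ℝ) ≤ 3), Real.sqrt_nonneg 3]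
        · -- m = 2 : not coprime
          exfalso
          simp only [hmn] at hcop
          exact absurd hcop (by decide)
      · -- q = 10
        have hmlt : m < 5 := by
          have hlt := hω.2
          rw [hωval] at hlt
          have hr : (m:ℝ) < 5 := by
            push_cast at hlt
            nlinarith
          exact_mod_cast hr
        interval_cases m
        · -- m = 1 : ω = π/5
          refine ⟨2, by norm_num, ?_⟩
          have hωeq : ω = π/5 := by rw [hωval]; push_cast; ring
          rw [hωeq]
          push_cast
          rw [show (2:ℝ) * (π/5) = 2*π/5 by ring]
          have hsin25 : Real.sin (2*π/5) = Real.cos (π/10) := by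
            rw [← Real.cos_pi_div_two_sub]
            congr 1
            ring
          rw [hsin25]
          have hp1 : (3.141592:ℝ) < π := pi_gt_d6
          have hp2 : π < 3.15 := pi_lt_d2
          have h5a : (0:ℝ) < π/5 := by linarith
          have h5b : π/5 ≤ 1 := by linarith
          have hs5 := Real.sin_gt_sub_cube h5a
          have hx3 : (π/5)^3 < 0.63^3 := by
            have hx : π/5 < 0.63 := by linarith
            exact pow_lt_pow_left₀ hx h5a.le (by norm_num)
          have hs5' : (0.56:ℝ) ≤ Real.sin (π/5) := by nlinarith
          have hc10 := Real.one_sub_sq_div_two_le_cos (x := π/10)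
          have hx2 : (π/10)^2 < 0.315^2 := by
            have hx : π/10 < 0.315 := by linarith
            exact pow_lt_pow_left₀ hx (by positivity) (by norm_num)
          have hc10' : (0.95:ℝ) ≤ Real.cos (π/10) := by nlinarith
          nlinarith
        · exfalso
          simp only [hmn] at hcop
          exact absurd hcop (by decide)
        · -- m = 3: ω = 3π/5
          refine ⟨1, le_rfl, ?_⟩
          have hωeq : ω = 3*π/5 := by rw [hωval]; push_cast; ring
          rw [hωeq]
          push_cast
          rw [one_mul]
          rw [show (3*π/5 : ℝ) = π - 2*π/5 by ring, Real.sin_pi_sub]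
          have hmono := Real.strictMonoOn_sin
            (Set.mem_Icc.2 ⟨by linarith, by linarith⟩)
            (Set.mem_Icc.2 ⟨by linarith, by linarith⟩)
            (by linarith : π/4 < 2*π/5)
          rw [Real.sin_pi_div_four] at hmono
          nlinarith [Real.sq_sqrt (by norm_num : (0:ℝ) ≤ 2), Real.sqrt_nonneg 2]
        · exfalso
          simp only [hmn] at hcop
          exact absurd hcop (by decide)
    · -- q ≥ 14
      obtain ⟨n, hn1, hsn⟩ := orbit_sin hq1 hcop hωval' (q / 4)
      refine ⟨n, hn1, ?_⟩
      have ht : q = 4*(q/4) + 2 := by omega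
      have htR : (q:ℝ) = 4*((q/4 : ℕ):ℝ) + 2 := by exact_mod_cast congrArg (fun z : ℕ => (z:ℝ)) ht
      have hqt : ((q:ℝ) - 4*((q/4:ℕ):ℝ))^2 = 2^2 := by rw [htR]; ring
      have hv := sin_orbit_near hq1 (q/4) 2 hqt
      rw [hsn]
      have hq14 : (14:ℝ) ≤ q := by exact_mod_cast hqge
      have hc0 : (0:ℝ) ≤ 1 - (π*2)^2/(8*(q:ℝ)^2) := by
        rw [sub_nonneg, div_le_one (by positivity)]
        nlinarith
      have hkey : (1:ℝ)/2 < (1/2 + 1/(4*(q:ℝ))) * (1 - (π*2)^2/(8*(q:ℝ)^2)) := by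
        have hdiff : (1/2 + 1/(4*(q:ℝ))) * (1 - (π*2)^2/(8*(q:ℝ)^2)) - 1/2
            = (2*(q:ℝ)^2 - 2*π^2*(q:ℝ) - π^2) / (8*(q:ℝ)^3) := by
          field_simp
          ring
        have hnum : (0:ℝ) < 2*(q:ℝ)^2 - 2*π^2*(q:ℝ) - π^2 := by
          nlinarith [mul_nonneg (sub_nonneg.2 hq14) hqR.le]
        have hpos : (0:ℝ) < (2*(q:ℝ)^2 - 2*π^2*(q:ℝ) - π^2) / (8*(q:ℝ)^3) := by positivity
        linarith
      calc (1:ℝ)/2 < (1/2 + 1/(4*(q:ℝ))) * (1 - (π*2)^2/(8*(q:ℝ)^2)) := hkey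
        _ ≤ Real.sin ω * Real.sin (2*π*((q/4:ℕ):ℝ)/q) := mul_le_mul hs hv hc0 hsin_pos
  · -- q ≡ 3 mod 4
    apply odd_case (q/4 + 1)
    have ht : 4*(q/4 + 1) = q + 1 := by omega
    have htR : 4*((q/4 + 1 : ℕ):ℝ) = (q:ℝ) + 1 := by exact_mod_cast congrArg (fun z : ℕ => (z:ℝ)) ht
    rw [htR]; ring

theorem exists_pos_lowerDensity_Eset_iff (ω : ℝ) (hω : ω ∈ Set.Ioo 0 π) :
    (∃ c : ℝ, 1 / 2 < c ∧ 0 < lowerDensity (Eset ω c)) ↔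
      ω ∈ Set.Ioo (π / 6) (5 * π / 6) := by
  have hπ := pi_pos
  constructor
  · rintro ⟨c, hc, hpos⟩
    by_contra hnot
    have hout : ω ≤ π/6 ∨ 5*π/6 ≤ ω := by
      by_contra h
      push_neg at h
      exact hnot ⟨h.1, by linarith [h.2]⟩
    have hsle := sin_le_half_of_out hω hout
    have hempty : Eset ω c = ∅ := by
      ext n
      simp only [Eset, Set.mem_setOf_eq, Set.mem_empty_iff_false, iff_false, not_and]
      intro _
      have hs0 : 0 ≤ Real.sin ω := Real.sin_nonneg_of_nonneg_of_le_pi hω.1.le hω.2.le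
      have h1 : Real.sin ω * Real.sin (n * ω) ≤ Real.sin ω * 1 :=
        mul_le_mul_of_nonneg_left (Real.sin_le_one _) hs0
      intro hle
      nlinarith
    rw [hempty] at hpos
    have : lowerDensity (∅ : Set ℕ) = 0 := by
      unfold lowerDensity
      have : (fun n : ℕ => (((∅ : Set ℕ) ∩ Set.Icc 1 n).ncard : ℝ) / n) = fun _ : ℕ => (0:ℝ) := by
        funext n
        simp
      rw [this, liminf_const]
    rw [this] at hpos
    exact lt_irrefl 0 hpos
  · intro hmem
    have hmem' : ω ∈ Set.Ioo (π/6) (5*π/6) := by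
      convert hmem using 2 <;> ring
    have hs := half_lt_sin hmem'
    by_cases hrat : ∃ q : ℕ, 1 ≤ q ∧ ∃ m : ℤ, (q:ℝ) * ω = 2*π*m
    · -- rational case
      classical
      have hex : ∃ q : ℕ, 1 ≤ q ∧ ∃ m : ℤ, (q:ℝ) * ω = 2*π*m := hrat
      set q := Nat.find hex with hqdef
      obtain ⟨hq1, m, hqω⟩ := Nat.find_spec hex
      have hmin : ∀ q' : ℕ, 1 ≤ q' → q' < q → ∀ m' : ℤ, (q':ℝ) * ω ≠ 2*π*m' := by
        intro q' hq'1 hq'lt m' heq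
        exact Nat.find_min hex hq'lt ⟨hq'1, m', heq⟩
      obtain ⟨n₀, hn₀1, hn₀⟩ := rational_case hω hmem' hq1 hqω hmin
      refine ⟨Real.sin ω * Real.sin ((n₀:ℝ) * ω), hn₀, ?_⟩
      apply density_pos_of_f _ (n₀ + q) (by omega) (fun i => n₀ + i * q)
      · intro i j hij
        show n₀ + i * q < n₀ + j * q
        have : i * q < j * q := Nat.mul_lt_mul_of_lt_of_le hij le_rfl (by omega)
        omega
      · intro i
        show 1 ≤ n₀ + i * q
        omega
      · intro i
        show n₀ + i * q ∈ Eset ω _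
        refine ⟨by omega, ?_⟩
        have hval : ((n₀:ℝ) + (i:ℝ) * q) * ω = (n₀:ℝ) * ω + ((i * m : ℤ) : ℝ) * (2*π) := by
          push_cast
          linear_combination (i:ℝ) * hqω
        rw [show ((n₀ + i * q : ℕ) : ℝ) = ((n₀ : ℝ) + (i:ℝ) * q) from by push_cast; ring,
          hval, Real.sin_add_int_mul_two_pi]
      · intro i
        show n₀ + i * q ≤ (n₀ + q) * (i + 1)
        have h1 : n₀ ≤ n₀ * (i + 1) := Nat.le_mul_of_pos_right _ (by omega)
        have h2 : i * q ≤ q * (i + 1) := by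
          rw [mul_comm]
          exact Nat.mul_le_mul_left _ (by omega)
        have heq : (n₀ + q) * (i + 1) = n₀ * (i + 1) + q * (i + 1) := by ring
        omega
    · -- irrational case
      push_neg at hrat
      have hirr : ∀ q : ℕ, 1 ≤ q → ∀ m : ℤ, (q:ℝ) * ω ≠ 2*π*m := fun q hq m => hrat q hq m
      set s := Real.sin ω with hsdef
      set ε : ℝ := (min 1 (2*s - 1))/2 with hεdef
      have hε0 : 0 < ε := by
        rw [hεdef]
        have : (0:ℝ) < min 1 (2*s - 1) := lt_min (by norm_num) (by linarith)
        linarith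
      have hε1 : ε ≤ 1 := by
        rw [hεdef]
        have : min 1 (2*s - 1) ≤ 1 := min_le_left _ _
        linarith
      have hεs : ε ≤ (2*s - 1)/2 := by
        rw [hεdef]
        have : min 1 (2*s - 1) ≤ 2*s - 1 := min_le_right _ _
        linarith
      have hε12 : ε ≤ 1/2 := by
        rw [hεdef]
        have : min 1 (2*s - 1) ≤ 1 := min_le_left _ _
        linarith
      have hs1 : s ≤ 1 := Real.sin_le_one ω
      have hc : 1/2 < s * (1 - ε^2/2) := by
        have hε2 : ε^2 ≤ (2*s-1)/4 := by nlinarith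
        nlinarith
      obtain ⟨C, hC1, f, hfmono, hf1, hfgrow, hfsin⟩ := irrational_case hω hirr hε0 hε1
      refine ⟨s * (1 - ε^2/2), hc, ?_⟩
      apply density_pos_of_f _ C hC1 f hfmono hf1 ?_ hfgrow
      intro i
      refine ⟨hf1 i, ?_⟩
      have hsin := hfsin i
      have hs0 : 0 ≤ s := by linarith
      calc s * (1 - ε^2/2) ≤ s * Real.sin ((f i : ℝ) * ω) :=
            mul_le_mul_of_nonneg_left hsin hs0
        _ = Real.sin ω * Real.sin ((f i : ℕ) * ω) := by rw [hsdef]
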